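/- Let F ⊆ ℝ² be the fractal square with base n = 3 and digit set D = {(0,0),(1,0),(2,0),(2,1),(0,2)}, i.e. the unique nonempty compact set with F = ⋃_{d∈D}(F+d)/3. Then every connected component of F is either a single point or a line segment parallel to the first coordinate axis, i.e. a set of the form [a,b] × {c} with a < b. -/

import Mathlib

open Set

namespace Frac


lemma key {α : Type*} [TopologicalSpace α] [T2Space α] [CompactSpace α]
    (v : α) (B : Set α) (hB : IsClosed B)
    (h : connectedComponent v ∩ B = ∅) :
    ∃ U : Set α, IsClopen U ∧ v ∈ U ∧ U ∩ B = ∅ := by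
  have hBc : IsCompact B := hB.isCompact
  have hcc := connectedComponent_eq_iInter_isClopen v
  have hcover : B ⊆ ⋃ Z : {Z : Set α // IsClopen Z ∧ v ∈ Z}, (Z : Set α)ᶜ := by
    intro b hb
    by_contra hbn
    simp only [mem_iUnion, mem_compl_iff, not_exists, not_not] at hbn
    have hbcc : b ∈ connectedComponent v := by
      rw [hcc]; exact mem_iInter.mpr fun Z => hbn Z
    have : b ∈ connectedComponent v ∩ B := ⟨hbcc, hb⟩
    rw [h] at this
    exact this
  obtain ⟨t, ht⟩ := hBc.elim_finite_subcover
    (fun Z : {Z : Set α // IsClopen Z ∧ v ∈ Z} => (Z : Set α)ᶜ)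
    (fun Z => Z.2.1.compl.isOpen) hcover
  refine ⟨⋂ Z ∈ t, (Z : Set α), isClopen_biInter_finset (fun Z _ => Z.2.1), ?_, ?_⟩
  · exact mem_iInter₂.mpr fun Z _ => Z.2.2
  · ext b
    simp only [mem_inter_iff, mem_iInter, mem_empty_iff_false, iff_false, not_and]
    intro h1 h2
    obtain ⟨Z, hZt, hZ⟩ := mem_iUnion₂.mp (ht h2)
    exact hZ (h1 Z hZt)

lemma compIn_isCompact {Y : Set (ℝ × ℝ)} (hY : IsCompact Y) (v : ℝ × ℝ) :
    IsCompact (connectedComponentIn Y v) := by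
  by_cases hv : v ∈ Y
  · rw [connectedComponentIn_eq_image hv]
    haveI : CompactSpace Y := isCompact_iff_compactSpace.mp hY
    exact (isClosed_connectedComponent.isCompact).image continuous_subtype_val
  · rw [connectedComponentIn_eq_empty hv]
    exact isCompact_empty

lemma bump {S : Set (ℝ × ℝ)} (hS : IsCompact S) (hSc : IsPreconnected S)
    {g : ℝ × ℝ → ℝ} (hg : Continuous g) {v : ℝ × ℝ} (hv : v ∈ S) {t : ℝ}
    (hvt : t ≤ g v) (hex : ∃ w ∈ S, g w < t) :
    ∃ z ∈ connectedComponentIn {p | p ∈ S ∧ t ≤ g p} v, g z = t := by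
  classical
  set A : Set (ℝ × ℝ) := {p | p ∈ S ∧ t ≤ g p} with hAdef
  have hvA : v ∈ A := ⟨hv, hvt⟩
  have hAclosed : IsClosed A :=
    (hS.isClosed.inter (isClosed_le continuous_const hg) : IsClosed (S ∩ {p | t ≤ g p}))
  have hA : IsCompact A := hS.of_isClosed_subset hAclosed (fun p hp => hp.1)
  by_contra hcon
  push_neg at hcon
  haveI : CompactSpace A := isCompact_iff_compactSpace.mp hA
  set vA : A := ⟨v, hvA⟩ with hvAdef
  have himg : connectedComponentIn A v = (↑) '' connectedComponent vA :=
    connectedComponentIn_eq_image hvA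
  have hccB : connectedComponent vA ∩ {a : A | g (a : ℝ × ℝ) = t} = ∅ := by
    ext a
    simp only [mem_inter_iff, mem_setOf_eq, mem_empty_iff_false, iff_false, not_and]
    intro ha hat
    exact hcon (a : ℝ × ℝ) (himg ▸ mem_image_of_mem _ ha) hat
  obtain ⟨U, hUclopen, hvU, hUB⟩ := key vA _
    (isClosed_eq (hg.comp continuous_subtype_val) continuous_const) hccB
  set U' : Set (ℝ × ℝ) := (↑) '' U with hU'def
  have hU'sub : U' ⊆ A := by rintro _ ⟨a, _, rfl⟩; exact a.2
  have hU'gt : ∀ p ∈ U', t < g p := by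
    rintro _ ⟨a, haU, rfl⟩
    rcases eq_or_lt_of_le a.2.2 with heq | hlt
    · exfalso
      have : a ∈ U ∩ {y | (g ∘ Subtype.val) y = t} := ⟨haU, heq.symm⟩
      rw [hUB] at this; exact this
    · exact hlt
  have hU'closed : IsClosed U' :=
    ((hUclopen.isClosed.isCompact).image continuous_subtype_val).isClosed
  obtain ⟨O, hO, hOpre⟩ := isOpen_induced_iff.mp hUclopen.isOpen
  set V : Set (ℝ × ℝ) := O ∩ {p | t < g p} with hVdef
  have hVopen : IsOpen V := hO.inter (isOpen_lt continuous_const hg)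
  have hSV : S ∩ V = U' := by
    ext p
    constructor
    · rintro ⟨hpS, hpO, hpt⟩
      have hpA : p ∈ A := ⟨hpS, le_of_lt hpt⟩
      refine ⟨⟨p, hpA⟩, ?_, rfl⟩
      rw [← hOpre]; exact hpO
    · rintro ⟨a, haU, rfl⟩
      refine ⟨a.2.1, ?_, hU'gt _ ⟨a, haU, rfl⟩⟩
      have : a ∈ (↑) ⁻¹' O := by rw [hOpre]; exact haU
      exact this
  obtain ⟨w, hwS, hwt⟩ := hex
  have hne1 : (S ∩ V).Nonempty := ⟨v, by rw [hSV]; exact ⟨vA, hvU, rfl⟩⟩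
  have hne2 : (S ∩ U'ᶜ).Nonempty :=
    ⟨w, hwS, fun hwU' => absurd (hU'gt w hwU') (not_lt.mpr hwt.le)⟩
  have hcover : S ⊆ V ∪ U'ᶜ := by
    intro p hp
    by_cases hpU' : p ∈ U'
    · left; exact (hSV ▸ hpU' : p ∈ S ∩ V).2
    · right; exact hpU'
  obtain ⟨p, hpS, hpV, hpU'c⟩ := hSc V U'ᶜ hVopen hU'closed.isOpen_compl hcover hne1 hne2
  exact hpU'c (by rw [← hSV]; exact ⟨hpS, hpV⟩)

lemma sep_union {ι : Type*} (E : ι → Set (ℝ × ℝ))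
    (hsep : ∀ i j, i ≠ j → ∀ a ∈ E i, ∀ b ∈ E j, (1/3 : ℝ) ≤ dist a b)
    {S : Set (ℝ × ℝ)} (hSc : IsPreconnected S) (hsub : S ⊆ ⋃ i, E i)
    {i₀ : ι} {s₀ : ℝ × ℝ} (hs₀ : s₀ ∈ S) (hs₀i : s₀ ∈ E i₀) :
    S ⊆ E i₀ := by
  set U : Set (ℝ × ℝ) := ⋃ a ∈ E i₀, Metric.ball a (1/6 : ℝ) with hUdef
  set V : Set (ℝ × ℝ) := ⋃ (j : ι) (_ : j ≠ i₀), ⋃ b ∈ E j, Metric.ball b (1/6 : ℝ) with hVdef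
  have hUo : IsOpen U := isOpen_biUnion fun _ _ => Metric.isOpen_ball
  have hVo : IsOpen V := isOpen_iUnion fun j => isOpen_iUnion fun _ =>
    isOpen_biUnion fun _ _ => Metric.isOpen_ball
  by_contra hns
  obtain ⟨s, hsS, hsnot⟩ := Set.not_subset.mp hns
  obtain ⟨j, hj⟩ := mem_iUnion.mp (hsub hsS)
  have hjne : j ≠ i₀ := fun h => hsnot (h ▸ hj)
  have hcover : S ⊆ U ∪ V := by
    intro x hx
    obtain ⟨i, hi⟩ := mem_iUnion.mp (hsub hx)
    by_cases hii : i = i₀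
    · left; exact mem_biUnion (hii ▸ hi) (Metric.mem_ball_self (by norm_num))
    · right
      exact mem_iUnion.mpr ⟨i, mem_iUnion.mpr ⟨hii, mem_biUnion hi (Metric.mem_ball_self (by norm_num))⟩⟩
  have hne1 : (S ∩ U).Nonempty :=
    ⟨s₀, hs₀, mem_biUnion hs₀i (Metric.mem_ball_self (by norm_num))⟩
  have hne2 : (S ∩ V).Nonempty := by
    refine ⟨s, hsS, ?_⟩
    exact mem_iUnion.mpr ⟨j, mem_iUnion.mpr ⟨hjne, mem_biUnion hj (Metric.mem_ball_self (by norm_num))⟩⟩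
  obtain ⟨x, -, hxU, hxV⟩ := hSc U V hUo hVo hcover hne1 hne2
  obtain ⟨a, haE, hxa⟩ := mem_iUnion₂.mp hxU
  obtain ⟨j', hj'⟩ := mem_iUnion.mp hxV
  obtain ⟨hj'ne, hj'rest⟩ := mem_iUnion.mp hj'
  obtain ⟨b, hbE, hxb⟩ := mem_iUnion₂.mp hj'rest
  have := hsep i₀ j' (Ne.symm hj'ne) a haE b hbE
  have hab : dist a b < 1/3 := by
    calc dist a b ≤ dist a x + dist x b := dist_triangle a x b
    _ < 1/6 + 1/6 := by
        have h1 : dist a x < 1/6 := by rw [dist_comm]; exact Metric.mem_ball.mp hxa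
        have h2 : dist x b < 1/6 := Metric.mem_ball.mp hxb
        linarith
    _ = 1/3 := by norm_num
  linarith

lemma crossing {S : Set (ℝ × ℝ)} (hS : IsCompact S) (hSc : IsPreconnected S)
    {t₁ t₂ : ℝ} (h12 : t₁ < t₂)
    (hlow : ∃ p ∈ S, p.2 < t₁) (hhigh : ∃ q ∈ S, t₂ < q.2) :
    ∃ v ∈ S ∩ {p : ℝ × ℝ | t₁ ≤ p.2 ∧ p.2 ≤ t₂},
      (∃ z ∈ connectedComponentIn (S ∩ {p : ℝ × ℝ | t₁ ≤ p.2 ∧ p.2 ≤ t₂}) v, z.2 = t₁) ∧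
      (∃ z ∈ connectedComponentIn (S ∩ {p : ℝ × ℝ | t₁ ≤ p.2 ∧ p.2 ≤ t₂}) v, z.2 = t₂) := by
  classical
  set Y : Set (ℝ × ℝ) := S ∩ {p : ℝ × ℝ | t₁ ≤ p.2 ∧ p.2 ≤ t₂} with hYdef
  have hYclosed : IsClosed Y := hS.isClosed.inter
    ((isClosed_le continuous_const continuous_snd).inter (isClosed_le continuous_snd continuous_const))
  have hY : IsCompact Y := hS.of_isClosed_subset hYclosed inter_subset_left
  haveI : CompactSpace Y := isCompact_iff_compactSpace.mp hY
  by_contra hcon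
  push_neg at hcon
  -- for each a : Y, a clopen neighborhood missing one of the two levels
  have hU : ∀ a : Y, ∃ U : Set Y, IsClopen U ∧ a ∈ U ∧
      (U ∩ {b : Y | (b : ℝ × ℝ).2 = t₁} = ∅ ∨ U ∩ {b : Y | (b : ℝ × ℝ).2 = t₂} = ∅) := by
    intro a
    have himg : connectedComponentIn Y (a : ℝ × ℝ) = (↑) '' connectedComponent a := by
      have := connectedComponentIn_eq_image (F := Y) a.2
      simpa using this
    have h2' := hcon (a : ℝ × ℝ) a.2
    by_cases h1 : ∃ z ∈ connectedComponentIn Y (a : ℝ × ℝ), z.2 = t₁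
    · have h2 : ∀ z ∈ connectedComponentIn Y (a : ℝ × ℝ), z.2 ≠ t₂ := by
        intro z hz
        exact fun ht => by
          obtain ⟨z₁, hz₁, hz₁t⟩ := h1
          exact absurd ht (by
            have := h2' ⟨z₁, hz₁, hz₁t⟩
            exact this z hz)
      have hcc : connectedComponent a ∩ {b : Y | (b : ℝ × ℝ).2 = t₂} = ∅ := by
        ext b
        simp only [mem_inter_iff, mem_setOf_eq, mem_empty_iff_false, iff_false, not_and]
        intro hb hbt
        exact h2 (b : ℝ × ℝ) (himg ▸ mem_image_of_mem _ hb) hbt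
      obtain ⟨U, hU1, hU2, hU3⟩ := key a _
        (isClosed_eq (continuous_snd.comp continuous_subtype_val) continuous_const) hcc
      exact ⟨U, hU1, hU2, Or.inr hU3⟩
    · push_neg at h1
      have hcc : connectedComponent a ∩ {b : Y | (b : ℝ × ℝ).2 = t₁} = ∅ := by
        ext b
        simp only [mem_inter_iff, mem_setOf_eq, mem_empty_iff_false, iff_false, not_and]
        intro hb hbt
        exact h1 (b : ℝ × ℝ) (himg ▸ mem_image_of_mem _ hb) hbt
      obtain ⟨U, hU1, hU2, hU3⟩ := key a _
        (isClosed_eq (continuous_snd.comp continuous_subtype_val) continuous_const) hcc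
      exact ⟨U, hU1, hU2, Or.inl hU3⟩
  choose U hUclopen hUmem hUside using hU
  obtain ⟨t, ht⟩ := isCompact_univ.elim_finite_subcover U (fun a => (hUclopen a).isOpen)
    (fun a _ => mem_iUnion.mpr ⟨a, hUmem a⟩)
  set Astar : Set Y := ⋃ a ∈ t.filter (fun a => U a ∩ {b : Y | (b : ℝ × ℝ).2 = t₂} = ∅), U a with hAstar
  have hAclopen : IsClopen Astar := isClopen_biUnion_finset (fun a _ => hUclopen a)
  set A' : Set (ℝ × ℝ) := (↑) '' Astar with hA'
  set B' : Set (ℝ × ℝ) := (↑) '' Astarᶜ with hB'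
  have hA'closed : IsClosed A' := ((hAclopen.isClosed.isCompact).image continuous_subtype_val).isClosed
  have hB'closed : IsClosed B' := ((hAclopen.compl.isClosed.isCompact).image continuous_subtype_val).isClosed
  have hA'not2 : ∀ p ∈ A', p.2 ≠ t₂ := by
    rintro _ ⟨b, hb, rfl⟩ hbt
    obtain ⟨a, hat, hbU⟩ := mem_iUnion₂.mp hb
    have hfil := (Finset.mem_filter.mp hat).2
    have : b ∈ U a ∩ {c : Y | (c : ℝ × ℝ).2 = t₂} := ⟨hbU, hbt⟩
    rw [hfil] at this; exact this
  have hB'not1 : ∀ p ∈ B', p.2 ≠ t₁ := by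
    rintro _ ⟨b, hb, rfl⟩ hbt
    obtain ⟨a, hat, hbU⟩ := mem_iUnion₂.mp (ht (mem_univ b))
    by_cases hfa : U a ∩ {c : Y | (c : ℝ × ℝ).2 = t₂} = ∅
    · exact hb (mem_iUnion₂.mpr ⟨a, Finset.mem_filter.mpr ⟨hat, hfa⟩, hbU⟩)
    · rcases hUside a with hs1 | hs2
      · have : b ∈ U a ∩ {c : Y | (c : ℝ × ℝ).2 = t₁} := ⟨hbU, hbt⟩
        rw [hs1] at this; exact this
      · exact hfa hs2
  set S₁ : Set (ℝ × ℝ) := (S ∩ {p : ℝ × ℝ | p.2 ≤ t₁}) ∪ A' with hS₁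
  set S₂ : Set (ℝ × ℝ) := (S ∩ {p : ℝ × ℝ | t₂ ≤ p.2}) ∪ B' with hS₂
  have hS₁closed : IsClosed S₁ :=
    (hS.isClosed.inter (isClosed_le continuous_snd continuous_const)).union hA'closed
  have hS₂closed : IsClosed S₂ :=
    (hS.isClosed.inter (isClosed_le continuous_const continuous_snd)).union hB'closed
  have hcover : S ⊆ S₁ ∪ S₂ := by
    intro p hp
    rcases le_or_gt p.2 t₁ with h1 | h1
    · exact Or.inl (Or.inl ⟨hp, h1⟩)
    rcases le_or_gt t₂ p.2 with h2 | h2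
    · exact Or.inr (Or.inl ⟨hp, h2⟩)
    · have hpY : p ∈ Y := ⟨hp, h1.le, h2.le⟩
      by_cases hpA : (⟨p, hpY⟩ : Y) ∈ Astar
      · exact Or.inl (Or.inr ⟨⟨p, hpY⟩, hpA, rfl⟩)
      · exact Or.inr (Or.inr ⟨⟨p, hpY⟩, hpA, rfl⟩)
  obtain ⟨p₁, hp₁⟩ := hlow
  obtain ⟨p₂, hp₂⟩ := hhigh
  have hne1 : (S ∩ S₁).Nonempty := ⟨p₁, hp₁.1, Or.inl ⟨hp₁.1, hp₁.2.le⟩⟩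
  have hne2 : (S ∩ S₂).Nonempty := ⟨p₂, hp₂.1, Or.inl ⟨hp₂.1, hp₂.2.le⟩⟩
  obtain ⟨r, hrS, hr1, hr2⟩ := isPreconnected_closed_iff.mp hSc S₁ S₂ hS₁closed hS₂closed hcover hne1 hne2
  -- derive contradiction
  rcases hr1 with ⟨-, hrle⟩ | hrA
  · rcases hr2 with ⟨-, hrge⟩ | hrB
    · exact absurd (le_trans hrge hrle) (not_le.mpr h12)
    · obtain ⟨b, hb, rfl⟩ := hrB
      have : (b : ℝ × ℝ).2 = t₁ := le_antisymm hrle b.2.2.1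
      exact hB'not1 _ ⟨b, hb, rfl⟩ this
  · rcases hr2 with ⟨-, hrge⟩ | hrB
    · obtain ⟨b, hb, rfl⟩ := hrA
      have : (b : ℝ × ℝ).2 = t₂ := le_antisymm b.2.2.2 hrge
      exact hA'not2 _ ⟨b, hb, rfl⟩ this
    · obtain ⟨b, hb, rfl⟩ := hrA
      obtain ⟨b', hb', hbb⟩ := hrB
      have : b' = b := Subtype.val_injective hbb
      rw [this] at hb'
      exact hb' hb



variable {F : Set (ℝ × ℝ)}

-- the five affine maps, coordinate form
lemma smul_add_pair (x : ℝ × ℝ) (a b : ℝ) :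
    (3 : ℝ)⁻¹ • (x + (a, b)) = ((3:ℝ)⁻¹ * (x.1 + a), (3:ℝ)⁻¹ * (x.2 + b)) := by
  cases x with
  | mk x1 x2 => simp [Prod.smul_mk, smul_eq_mul]

lemma F_cases (hF : F = ⋃ d ∈ ({(0, 0), (1, 0), (2, 0), (2, 1), (0, 2)} : Set (ℝ × ℝ)),
      (fun x : ℝ × ℝ => (3 : ℝ)⁻¹ • (x + d)) '' F)
    {p : ℝ × ℝ} (hp : p ∈ F) :
    ∃ q ∈ F, ∃ a b : ℝ,
      p = ((3:ℝ)⁻¹ * (q.1 + a), (3:ℝ)⁻¹ * (q.2 + b)) ∧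
      ((a = 0 ∧ b = 0) ∨ (a = 1 ∧ b = 0) ∨ (a = 2 ∧ b = 0) ∨ (a = 2 ∧ b = 1) ∨ (a = 0 ∧ b = 2)) := by
  rw [hF] at hp
  simp only [mem_iUnion, mem_image, mem_insert_iff, mem_singleton_iff, exists_prop] at hp
  obtain ⟨d, hd, q, hq, rfl⟩ := hp
  rcases hd with rfl | rfl | rfl | rfl | rfl
  · exact ⟨q, hq, 0, 0, by rw [smul_add_pair], by tauto⟩
  · exact ⟨q, hq, 1, 0, by rw [smul_add_pair], by tauto⟩
  · exact ⟨q, hq, 2, 0, by rw [smul_add_pair], by tauto⟩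
  · exact ⟨q, hq, 2, 1, by rw [smul_add_pair], by tauto⟩
  · exact ⟨q, hq, 0, 2, by rw [smul_add_pair], by tauto⟩

lemma F_mem (hF : F = ⋃ d ∈ ({(0, 0), (1, 0), (2, 0), (2, 1), (0, 2)} : Set (ℝ × ℝ)),
      (fun x : ℝ × ℝ => (3 : ℝ)⁻¹ • (x + d)) '' F)
    {q : ℝ × ℝ} (hq : q ∈ F) {a b : ℝ}
    (hab : (a = 0 ∧ b = 0) ∨ (a = 1 ∧ b = 0) ∨ (a = 2 ∧ b = 0) ∨ (a = 2 ∧ b = 1) ∨ (a = 0 ∧ b = 2)) :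
    ((3:ℝ)⁻¹ * (q.1 + a), (3:ℝ)⁻¹ * (q.2 + b)) ∈ F := by
  rw [hF]
  simp only [mem_iUnion, mem_image, mem_insert_iff, mem_singleton_iff, exists_prop]
  refine ⟨(a, b), ?_, q, hq, (smul_add_pair q a b).symm ▸ rfl⟩
  rcases hab with ⟨rfl, rfl⟩ | ⟨rfl, rfl⟩ | ⟨rfl, rfl⟩ | ⟨rfl, rfl⟩ | ⟨rfl, rfl⟩ <;> tauto

lemma F_bounds (hFne : F.Nonempty) (hFc : IsCompact F)
    (hF : F = ⋃ d ∈ ({(0, 0), (1, 0), (2, 0), (2, 1), (0, 2)} : Set (ℝ × ℝ)),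
      (fun x : ℝ × ℝ => (3 : ℝ)⁻¹ • (x + d)) '' F) :
    ∀ p ∈ F, 0 ≤ p.1 ∧ p.1 ≤ 1 ∧ 0 ≤ p.2 ∧ p.2 ≤ 1 := by
  have habr : ∀ a b : ℝ,
      ((a = 0 ∧ b = 0) ∨ (a = 1 ∧ b = 0) ∨ (a = 2 ∧ b = 0) ∨ (a = 2 ∧ b = 1) ∨ (a = 0 ∧ b = 2)) →
      0 ≤ a ∧ a ≤ 2 ∧ 0 ≤ b ∧ b ≤ 2 := by
    rintro a b (⟨rfl, rfl⟩ | ⟨rfl, rfl⟩ | ⟨rfl, rfl⟩ | ⟨rfl, rfl⟩ | ⟨rfl, rfl⟩) <;> norm_num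
  have hmax1 : ∀ p ∈ F, p.1 ≤ 1 := by
    obtain ⟨m, hmF, hm⟩ := hFc.exists_isMaxOn hFne continuous_fst.continuousOn
    have hmax := isMaxOn_iff.mp hm
    obtain ⟨q, hq, a, b, heq, hab⟩ := F_cases hF hmF
    have h1 : m.1 = (3:ℝ)⁻¹ * (q.1 + a) := by rw [heq]
    have hq1 : q.1 ≤ m.1 := hmax q hq
    have ha := habr a b hab
    have : m.1 ≤ 1 := by nlinarith
    exact fun p hp => le_trans (hmax p hp) this
  have hmin1 : ∀ p ∈ F, 0 ≤ p.1 := by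
    obtain ⟨m, hmF, hm⟩ := hFc.exists_isMinOn hFne continuous_fst.continuousOn
    have hmin := isMinOn_iff.mp hm
    obtain ⟨q, hq, a, b, heq, hab⟩ := F_cases hF hmF
    have h1 : m.1 = (3:ℝ)⁻¹ * (q.1 + a) := by rw [heq]
    have hq1 : m.1 ≤ q.1 := hmin q hq
    have ha := habr a b hab
    have : 0 ≤ m.1 := by nlinarith
    exact fun p hp => le_trans this (hmin p hp)
  have hmax2 : ∀ p ∈ F, p.2 ≤ 1 := by
    obtain ⟨m, hmF, hm⟩ := hFc.exists_isMaxOn hFne continuous_snd.continuousOn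
    have hmax := isMaxOn_iff.mp hm
    obtain ⟨q, hq, a, b, heq, hab⟩ := F_cases hF hmF
    have h1 : m.2 = (3:ℝ)⁻¹ * (q.2 + b) := by rw [heq]
    have hq1 : q.2 ≤ m.2 := hmax q hq
    have ha := habr a b hab
    have : m.2 ≤ 1 := by nlinarith
    exact fun p hp => le_trans (hmax p hp) this
  have hmin2 : ∀ p ∈ F, 0 ≤ p.2 := by
    obtain ⟨m, hmF, hm⟩ := hFc.exists_isMinOn hFne continuous_snd.continuousOn
    have hmin := isMinOn_iff.mp hm
    obtain ⟨q, hq, a, b, heq, hab⟩ := F_cases hF hmF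
    have h1 : m.2 = (3:ℝ)⁻¹ * (q.2 + b) := by rw [heq]
    have hq1 : m.2 ≤ q.2 := hmin q hq
    have ha := habr a b hab
    have : 0 ≤ m.2 := by nlinarith
    exact fun p hp => le_trans this (hmin p hp)
  exact fun p hp => ⟨hmin1 p hp, hmax1 p hp, hmin2 p hp, hmax2 p hp⟩

lemma mem_of_fixed (hFne : F.Nonempty) (hFc : IsCompact F)
    (f : ℝ × ℝ → ℝ × ℝ) (hfF : ∀ p ∈ F, f p ∈ F) (c : ℝ × ℝ)
    (hdist : ∀ p, dist (f p) c ≤ (1/3) * dist p c) : c ∈ F := by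
  obtain ⟨p₀, hp₀⟩ := hFne
  have hmem : ∀ n, f^[n] p₀ ∈ F := by
    intro n
    induction n with
    | zero => simpa using hp₀
    | succ n ih => rw [Function.iterate_succ_apply']; exact hfF _ ih
  have hd : ∀ n, dist (f^[n] p₀) c ≤ (1/3 : ℝ)^n * dist p₀ c := by
    intro n
    induction n with
    | zero => simp
    | succ n ih =>
      rw [Function.iterate_succ_apply']
      calc dist (f (f^[n] p₀)) c ≤ (1/3) * dist (f^[n] p₀) c := hdist _
      _ ≤ (1/3) * ((1/3)^n * dist p₀ c) := by linarith [ih]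
      _ = (1/3 : ℝ)^(n+1) * dist p₀ c := by ring
  have htend : Filter.Tendsto (fun n => f^[n] p₀) Filter.atTop (nhds c) := by
    rw [tendsto_iff_dist_tendsto_zero]
    apply squeeze_zero (fun n => dist_nonneg) hd
    have := (tendsto_pow_atTop_nhds_zero_of_lt_one (by norm_num : (0:ℝ) ≤ 1/3) (by norm_num)).mul_const (dist p₀ c)
    simpa using this
  exact hFc.isClosed.mem_of_tendsto htend (Filter.Eventually.of_forall hmem)

lemma corner_mem (hFne : F.Nonempty) (hFc : IsCompact F)
    (hF : F = ⋃ d ∈ ({(0, 0), (1, 0), (2, 0), (2, 1), (0, 2)} : Set (ℝ × ℝ)),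
      (fun x : ℝ × ℝ => (3 : ℝ)⁻¹ • (x + d)) '' F) :
    ((0:ℝ), (0:ℝ)) ∈ F ∧ ((1:ℝ), (0:ℝ)) ∈ F ∧ ((0:ℝ), (1:ℝ)) ∈ F := by
  have key : ∀ a b : ℝ,
      ((a = 0 ∧ b = 0) ∨ (a = 1 ∧ b = 0) ∨ (a = 2 ∧ b = 0) ∨ (a = 2 ∧ b = 1) ∨ (a = 0 ∧ b = 2)) →
      ((a/2 : ℝ), (b/2 : ℝ)) ∈ F := by
    intro a b hab
    set f : ℝ × ℝ → ℝ × ℝ := fun p => ((3:ℝ)⁻¹ * (p.1 + a), (3:ℝ)⁻¹ * (p.2 + b)) with hfdef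
    have hfF : ∀ p ∈ F, f p ∈ F := fun p hp => F_mem hF hp hab
    apply mem_of_fixed hFne hFc f hfF
    intro p
    have h1 : (f p).1 - (a/2) = (3:ℝ)⁻¹ * (p.1 - a/2) := by simp [hfdef]; ring
    have h2 : (f p).2 - (b/2) = (3:ℝ)⁻¹ * (p.2 - b/2) := by simp [hfdef]; ring
    rw [Prod.dist_eq, Prod.dist_eq]
    apply max_le
    · calc dist (f p).1 (a/2) = |(f p).1 - a/2| := Real.dist_eq _ _
      _ = (3:ℝ)⁻¹ * |p.1 - a/2| := by rw [h1, abs_mul]; norm_num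
      _ ≤ (1/3) * max (dist p.1 (a/2)) (dist p.2 (b/2)) := by
          simp only [Real.dist_eq]
          nlinarith [le_max_left (|p.1 - a/2|) (|p.2 - b/2|), abs_nonneg (p.1 - a/2)]
    · calc dist (f p).2 (b/2) = |(f p).2 - b/2| := Real.dist_eq _ _
      _ = (3:ℝ)⁻¹ * |p.2 - b/2| := by rw [h2, abs_mul]; norm_num
      _ ≤ (1/3) * max (dist p.1 (a/2)) (dist p.2 (b/2)) := by
          simp only [Real.dist_eq]
          nlinarith [le_max_right (|p.1 - a/2|) (|p.2 - b/2|), abs_nonneg (p.2 - b/2)]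
  refine ⟨?_, ?_, ?_⟩
  · have := key 0 0 (by tauto); norm_num at this; exact this
  · have := key 2 0 (by tauto); norm_num at this; exact this
  · have := key 0 2 (by tauto); norm_num at this; exact this

lemma slice_top (hFne : F.Nonempty) (hFc : IsCompact F)
    (hF : F = ⋃ d ∈ ({(0, 0), (1, 0), (2, 0), (2, 1), (0, 2)} : Set (ℝ × ℝ)),
      (fun x : ℝ × ℝ => (3 : ℝ)⁻¹ • (x + d)) '' F) :
    ∀ p ∈ F, p.2 = 1 → p = ((0:ℝ), (1:ℝ)) := by
  have hbd := F_bounds hFne hFc hF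
  intro p hp hp2
  set T : Set (ℝ × ℝ) := F ∩ {r : ℝ × ℝ | r.2 = 1} with hT
  have hTc : IsCompact T := hFc.of_isClosed_subset
    (hFc.isClosed.inter (isClosed_eq continuous_snd continuous_const)) inter_subset_left
  have hTne : T.Nonempty := ⟨p, hp, hp2⟩
  obtain ⟨m, hmT, hm⟩ := hTc.exists_isMaxOn hTne continuous_fst.continuousOn
  have hmax := isMaxOn_iff.mp hm
  obtain ⟨q, hq, a, b, heq, hab⟩ := F_cases hF hmT.1
  have h2 : m.2 = (3:ℝ)⁻¹ * (q.2 + b) := by rw [heq]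
  have h1 : m.1 = (3:ℝ)⁻¹ * (q.1 + a) := by rw [heq]
  have hm2 : m.2 = 1 := hmT.2
  have hqb : q.2 ≤ 1 := (hbd q hq).2.2.2
  have hb2 : b = 2 ∧ a = 0 := by
    rcases hab with ⟨ha, hb⟩ | ⟨ha, hb⟩ | ⟨ha, hb⟩ | ⟨ha, hb⟩ | ⟨ha, hb⟩ <;>
      (constructor <;> first | (subst ha; subst hb; nlinarith) | (subst ha; subst hb; rfl))
  have hq2 : q.2 = 1 := by rw [hb2.1] at h2; nlinarith
  have hqT : q ∈ T := ⟨hq, hq2⟩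
  have hqm : q.1 ≤ m.1 := hmax q hqT
  have hm1 : m.1 = 0 := by
    rw [hb2.2] at h1
    have h0 : 0 ≤ m.1 := (hbd m hmT.1).1
    nlinarith
  have hp1 : p.1 = 0 := by
    have := hmax p ⟨hp, hp2⟩
    have h0 : 0 ≤ p.1 := (hbd p hp).1
    rw [hm1] at this
    linarith
  have : p = (p.1, p.2) := rfl
  rw [this, hp1, hp2]

lemma upper_third (hFne : F.Nonempty) (hFc : IsCompact F)
    (hF : F = ⋃ d ∈ ({(0, 0), (1, 0), (2, 0), (2, 1), (0, 2)} : Set (ℝ × ℝ)),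
      (fun x : ℝ × ℝ => (3 : ℝ)⁻¹ • (x + d)) '' F) :
    ∀ p ∈ F, 2/3 < p.2 → p.1 ≤ 1/3 := by
  have hbd := F_bounds hFne hFc hF
  intro p hp hp2
  obtain ⟨q, hq, a, b, heq, hab⟩ := F_cases hF hp
  have h2 : p.2 = (3:ℝ)⁻¹ * (q.2 + b) := by rw [heq]
  have h1 : p.1 = (3:ℝ)⁻¹ * (q.1 + a) := by rw [heq]
  have hqb := hbd q hq
  have ha0 : a = 0 ∧ b = 2 := by
    rcases hab with ⟨ha, hb⟩ | ⟨ha, hb⟩ | ⟨ha, hb⟩ | ⟨ha, hb⟩ | ⟨ha, hb⟩ <;>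
      (constructor <;> first | (subst ha; subst hb; nlinarith) | (subst ha; subst hb; rfl))
  rw [ha0.1] at h1
  nlinarith [hqb.2.1]


/-! ### The extended sets -/

def WS (F : Set (ℝ × ℝ)) : Set (ℝ × ℝ) :=
  {r | (∃ j : ℤ, ((r.1 - (j : ℝ), r.2) : ℝ × ℝ) ∈ F) ∨ r.2 = 1}

def XS (F : Set (ℝ × ℝ)) : Set (ℝ × ℝ) :=
  {r | (∃ j : ℤ, ((r.1 - (j : ℝ), r.2) : ℝ × ℝ) ∈ F) ∨
       (∃ j : ℤ, ((r.1 - (3*(j:ℝ)+2), r.2 - 1) : ℝ × ℝ) ∈ F) ∨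
       (∃ j : ℤ, ((r.1 - 3*(j:ℝ), r.2 - 2) : ℝ × ℝ) ∈ F) ∨ r.2 = 3}

def Pj (F : Set (ℝ × ℝ)) (j : ℤ) : Set (ℝ × ℝ) :=
  {r | ((r.1 - (3*(j:ℝ)+2), r.2 - 1) : ℝ × ℝ) ∈ F}

def Sm (m : ℤ) : Set (ℝ × ℝ) :=
  {r | r.2 = 2 ∧ 3*(m:ℝ) ≤ r.1 ∧ r.1 ≤ 3*(m:ℝ)+1}

def QL (F : Set (ℝ × ℝ)) : Set (ℝ × ℝ) :=
  {r | (∃ j : ℤ, ((r.1 - 3*(j:ℝ), r.2 - 2) : ℝ × ℝ) ∈ F) ∨ r.2 = 3}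

variable {F : Set (ℝ × ℝ)}

lemma F_sub_WS : F ⊆ WS F := by
  intro r hr
  refine Or.inl ⟨0, ?_⟩
  simpa using hr

lemma scale_mem_XS (hF : F = ⋃ d ∈ ({(0, 0), (1, 0), (2, 0), (2, 1), (0, 2)} : Set (ℝ × ℝ)),
      (fun x : ℝ × ℝ => (3 : ℝ)⁻¹ • (x + d)) '' F)
    {r : ℝ × ℝ} (hr : r ∈ WS F) : ((3*r.1, 3*r.2) : ℝ × ℝ) ∈ XS F := by
  rcases hr with ⟨j, hj⟩ | h1
  · obtain ⟨q, hq, a, b, heq, hab⟩ := F_cases hF hj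
    have e1 : r.1 - (j:ℝ) = (3:ℝ)⁻¹ * (q.1 + a) := congrArg Prod.fst heq
    have e2 : r.2 = (3:ℝ)⁻¹ * (q.2 + b) := congrArg Prod.snd heq
    rcases hab with ⟨ha, hb⟩ | ⟨ha, hb⟩ | ⟨ha, hb⟩ | ⟨ha, hb⟩ | ⟨ha, hb⟩
    · refine Or.inl ⟨3*j, ?_⟩
      have hpe : ((3*r.1 - ((3*j : ℤ) : ℝ), 3*r.2) : ℝ × ℝ) = (q.1, q.2) := by
        rw [Prod.mk.injEq]; subst ha hb; push_cast; constructor <;> linarith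
      rw [hpe]; simpa using hq
    · refine Or.inl ⟨3*j+1, ?_⟩
      have hpe : ((3*r.1 - ((3*j+1 : ℤ) : ℝ), 3*r.2) : ℝ × ℝ) = (q.1, q.2) := by
        rw [Prod.mk.injEq]; subst ha hb; push_cast; constructor <;> linarith
      rw [hpe]; simpa using hq
    · refine Or.inl ⟨3*j+2, ?_⟩
      have hpe : ((3*r.1 - ((3*j+2 : ℤ) : ℝ), 3*r.2) : ℝ × ℝ) = (q.1, q.2) := by
        rw [Prod.mk.injEq]; subst ha hb; push_cast; constructor <;> linarith
      rw [hpe]; simpa using hq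
    · refine Or.inr (Or.inl ⟨j, ?_⟩)
      have hpe : ((3*r.1 - (3*(j:ℝ)+2), 3*r.2 - 1) : ℝ × ℝ) = (q.1, q.2) := by
        rw [Prod.mk.injEq]; subst ha hb; constructor <;> linarith
      rw [hpe]; simpa using hq
    · refine Or.inr (Or.inr (Or.inl ⟨j, ?_⟩))
      have hpe : ((3*r.1 - 3*(j:ℝ), 3*r.2 - 2) : ℝ × ℝ) = (q.1, q.2) := by
        rw [Prod.mk.injEq]; subst ha hb; constructor <;> linarith
      rw [hpe]; simpa using hq
  · exact Or.inr (Or.inr (Or.inr (by simp only [mem_setOf_eq] at *; linarith)))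

lemma XS_bot (hFne : F.Nonempty) (hFc : IsCompact F)
    (hF : F = ⋃ d ∈ ({(0, 0), (1, 0), (2, 0), (2, 1), (0, 2)} : Set (ℝ × ℝ)),
      (fun x : ℝ × ℝ => (3 : ℝ)⁻¹ • (x + d)) '' F)
    {r : ℝ × ℝ} (hr : r ∈ XS F) (h1 : r.2 ≤ 1) : r ∈ WS F := by
  have hbd := F_bounds hFne hFc hF
  rcases hr with h | ⟨j, hj⟩ | ⟨j, hj⟩ | h3
  · exact Or.inl h
  · have := (hbd _ hj).2.2.1
    simp only [mem_setOf_eq] at this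
    exact Or.inr (by simp at this ⊢; linarith)
  · have := (hbd _ hj).2.2.1
    simp only [mem_setOf_eq] at this
    exfalso; simp at this; linarith
  · exfalso; linarith

lemma XS_mid (hFne : F.Nonempty) (hFc : IsCompact F)
    (hF : F = ⋃ d ∈ ({(0, 0), (1, 0), (2, 0), (2, 1), (0, 2)} : Set (ℝ × ℝ)),
      (fun x : ℝ × ℝ => (3 : ℝ)⁻¹ • (x + d)) '' F)
    {r : ℝ × ℝ} (hr : r ∈ XS F) (h1 : 1 ≤ r.2) (h2 : r.2 ≤ 2) :
    (∃ j : ℤ, r ∈ Pj F j) ∨ (∃ m : ℤ, r = ((3*(m:ℝ)+1, 1) : ℝ × ℝ)) ∨ (∃ m : ℤ, r ∈ Sm m) := by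
  have hbd := F_bounds hFne hFc hF
  have hcor := corner_mem hFne hFc hF
  rcases hr with ⟨j, hj⟩ | ⟨j, hj⟩ | ⟨j, hj⟩ | h3
  · -- bottom layer: must be a top point (j, 1)
    have hb := hbd _ hj
    have hr2 : r.2 = 1 := le_antisymm (by simpa using hb.2.2.2) h1
    have := slice_top hFne hFc hF _ hj (by simpa using hr2)
    have hr1 : r.1 = (j : ℝ) := by
      have h := congrArg Prod.fst this
      simp only at h
      linarith
    have hj3 : j % 3 = 0 ∨ j % 3 = 1 ∨ j % 3 = 2 := by omega
    set m : ℤ := j / 3 with hm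
    have hjm : j = 3 * m + j % 3 := by omega
    rcases hj3 with hc | hc | hc
    · refine Or.inl ⟨m - 1, ?_⟩
      have : ((r.1 - (3*((m-1 : ℤ):ℝ)+2), r.2 - 1) : ℝ × ℝ) = ((1:ℝ), (0:ℝ)) := by
        rw [Prod.ext_iff]
        constructor
        · simp only
          rw [hr1]
          have : (j : ℝ) = 3 * (m : ℝ) := by exact_mod_cast (by omega : j = 3 * m)
          rw [this]; push_cast; ring
        · simp only; linarith
      rw [Pj, mem_setOf_eq, this]; exact hcor.2.1
    · refine Or.inr (Or.inl ⟨m, ?_⟩)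
      rw [Prod.ext_iff]
      constructor
      · simp only
        rw [hr1]
        exact_mod_cast (by omega : j = 3 * m + 1)
      · simpa using hr2
    · refine Or.inl ⟨m, ?_⟩
      have : ((r.1 - (3*((m : ℤ):ℝ)+2), r.2 - 1) : ℝ × ℝ) = ((0:ℝ), (0:ℝ)) := by
        rw [Prod.ext_iff]
        constructor
        · simp only
          rw [hr1]
          have : (j : ℝ) = 3 * (m : ℝ) + 2 := by exact_mod_cast (by omega : j = 3 * m + 2)
          rw [this]; ring
        · simp only; linarith
      rw [Pj, mem_setOf_eq, this]; exact hcor.1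
  · exact Or.inl ⟨j, hj⟩
  · refine Or.inr (Or.inr ⟨j, ?_, ?_, ?_⟩)
    · have := (hbd _ hj).2.2.1
      simp only at this
      linarith
    · have := (hbd _ hj).1
      simp only at this
      linarith
    · have := (hbd _ hj).2.1
      simp only at this
      linarith
  · exfalso; linarith

lemma XS_top (hFne : F.Nonempty) (hFc : IsCompact F)
    (hF : F = ⋃ d ∈ ({(0, 0), (1, 0), (2, 0), (2, 1), (0, 2)} : Set (ℝ × ℝ)),
      (fun x : ℝ × ℝ => (3 : ℝ)⁻¹ • (x + d)) '' F)
    {r : ℝ × ℝ} (hr : r ∈ XS F) (h2 : 2 ≤ r.2) :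
    r ∈ QL F ∨ ∃ j : ℤ, r = ((3*(j:ℝ)+2, 2) : ℝ × ℝ) := by
  have hbd := F_bounds hFne hFc hF
  rcases hr with ⟨j, hj⟩ | ⟨j, hj⟩ | ⟨j, hj⟩ | h3
  · exfalso
    have := (hbd _ hj).2.2.2
    simp only at this
    linarith
  · have hb := hbd _ hj
    have hr2 : r.2 = 2 := by
      have := hb.2.2.2; simp only at this; linarith
    have := slice_top hFne hFc hF _ hj (by simp only; linarith)
    refine Or.inr ⟨j, ?_⟩
    rw [Prod.ext_iff]
    have h1 := congrArg Prod.fst this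
    simp only at h1
    constructor
    · show r.1 = 3*(j:ℝ)+2
      linarith
    · exact hr2
  · exact Or.inl (Or.inl ⟨j, hj⟩)
  · exact Or.inl (Or.inr h3)

/-! ### Separation of the middle and top layers -/

lemma abs_fst_le_dist (a b : ℝ × ℝ) : |a.1 - b.1| ≤ dist a b := by
  rw [Prod.dist_eq, ← Real.dist_eq]; exact le_max_left _ _

lemma abs_snd_le_dist (a b : ℝ × ℝ) : |a.2 - b.2| ≤ dist a b := by
  rw [Prod.dist_eq, ← Real.dist_eq]; exact le_max_right _ _

lemma Pj_bounds (hFne : F.Nonempty) (hFc : IsCompact F)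
    (hF : F = ⋃ d ∈ ({(0, 0), (1, 0), (2, 0), (2, 1), (0, 2)} : Set (ℝ × ℝ)),
      (fun x : ℝ × ℝ => (3 : ℝ)⁻¹ • (x + d)) '' F)
    {j : ℤ} {r : ℝ × ℝ} (h : r ∈ Pj F j) :
    3*(j:ℝ)+2 ≤ r.1 ∧ r.1 ≤ 3*(j:ℝ)+3 ∧ 1 ≤ r.2 ∧ r.2 ≤ 2 := by
  have hb := F_bounds hFne hFc hF _ h
  simp only at hb
  exact ⟨by linarith [hb.1], by linarith [hb.2.1], by linarith [hb.2.2.1], by linarith [hb.2.2.2]⟩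

lemma Pj_upper (hFne : F.Nonempty) (hFc : IsCompact F)
    (hF : F = ⋃ d ∈ ({(0, 0), (1, 0), (2, 0), (2, 1), (0, 2)} : Set (ℝ × ℝ)),
      (fun x : ℝ × ℝ => (3 : ℝ)⁻¹ • (x + d)) '' F)
    {j : ℤ} {r : ℝ × ℝ} (h : r ∈ Pj F j) (h2 : 5/3 < r.2) : r.1 ≤ 3*(j:ℝ)+2+1/3 := by
  have := upper_third hFne hFc hF _ h (by simp only; linarith)
  simp only at this
  linarith

lemma mid_sep (hFne : F.Nonempty) (hFc : IsCompact F)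
    (hF : F = ⋃ d ∈ ({(0, 0), (1, 0), (2, 0), (2, 1), (0, 2)} : Set (ℝ × ℝ)),
      (fun x : ℝ × ℝ => (3 : ℝ)⁻¹ • (x + d)) '' F) :
    ∀ i i' : ℤ ⊕ ℤ ⊕ ℤ, i ≠ i' →
      ∀ a ∈ Sum.elim (Pj F) (Sum.elim (fun m : ℤ => {((3*(m:ℝ)+1, 1) : ℝ × ℝ)}) Sm) i,
      ∀ b ∈ Sum.elim (Pj F) (Sum.elim (fun m : ℤ => {((3*(m:ℝ)+1, 1) : ℝ × ℝ)}) Sm) i',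
      (1/3 : ℝ) ≤ dist a b := by
  have hPP : ∀ j m : ℤ, j ≠ m → ∀ a ∈ Pj F j, ∀ b ∈ Pj F m, (1/3:ℝ) ≤ dist a b := by
    intro j m hne a ha b hb
    have hba := Pj_bounds hFne hFc hF ha
    have hbb := Pj_bounds hFne hFc hF hb
    refine le_trans ?_ (abs_fst_le_dist a b)
    rcases lt_or_gt_of_ne hne with hlt | hlt
    · have hc : (j:ℝ) + 1 ≤ (m:ℝ) := by exact_mod_cast (by omega : j + 1 ≤ m)
      exact le_abs.mpr (Or.inr (by linarith))
    · have hc : (m:ℝ) + 1 ≤ (j:ℝ) := by exact_mod_cast (by omega : m + 1 ≤ j)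
      exact le_abs.mpr (Or.inl (by linarith))
  have hPZ : ∀ j m : ℤ, ∀ a ∈ Pj F j, (1/3:ℝ) ≤ dist a ((3*(m:ℝ)+1, 1) : ℝ × ℝ) := by
    intro j m a ha
    have hba := Pj_bounds hFne hFc hF ha
    refine le_trans ?_ (abs_fst_le_dist a _)
    rcases le_or_gt m j with hle | hlt
    · have hc : (m:ℝ) ≤ (j:ℝ) := by exact_mod_cast hle
      exact le_abs.mpr (Or.inl (by simp only; linarith))
    · have hc : (j:ℝ) + 1 ≤ (m:ℝ) := by exact_mod_cast (by omega : j + 1 ≤ m)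
      exact le_abs.mpr (Or.inr (by simp only; linarith))
  have hPS : ∀ j m : ℤ, ∀ a ∈ Pj F j, ∀ b ∈ Sm m, (1/3:ℝ) ≤ dist a b := by
    intro j m a ha b hb
    obtain ⟨hb2, hb1, hb1'⟩ := hb
    have hba := Pj_bounds hFne hFc hF ha
    rcases le_or_gt a.2 (5/3) with hy | hy
    · refine le_trans ?_ (abs_snd_le_dist a b)
      exact le_abs.mpr (Or.inr (by linarith))
    · have hup := Pj_upper hFne hFc hF ha hy
      refine le_trans ?_ (abs_fst_le_dist a b)
      rcases le_or_gt m j with hle | hlt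
      · have hc : (m:ℝ) ≤ (j:ℝ) := by exact_mod_cast hle
        exact le_abs.mpr (Or.inl (by linarith))
      · have hc : (j:ℝ) + 1 ≤ (m:ℝ) := by exact_mod_cast (by omega : j + 1 ≤ m)
        exact le_abs.mpr (Or.inr (by linarith))
  have hZZ : ∀ m m' : ℤ, m ≠ m' →
      (1/3:ℝ) ≤ dist ((3*(m:ℝ)+1, 1) : ℝ × ℝ) ((3*(m':ℝ)+1, 1) : ℝ × ℝ) := by
    intro m m' hne
    refine le_trans ?_ (abs_fst_le_dist _ _)
    rcases lt_or_gt_of_ne hne with hlt | hlt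
    · have hc : (m:ℝ) + 1 ≤ (m':ℝ) := by exact_mod_cast (by omega : m + 1 ≤ m')
      exact le_abs.mpr (Or.inr (by simp only; linarith))
    · have hc : (m':ℝ) + 1 ≤ (m:ℝ) := by exact_mod_cast (by omega : m' + 1 ≤ m)
      exact le_abs.mpr (Or.inl (by simp only; linarith))
  have hZS : ∀ m m' : ℤ, ∀ b ∈ Sm m', (1/3:ℝ) ≤ dist ((3*(m:ℝ)+1, 1) : ℝ × ℝ) b := by
    intro m m' b hb
    refine le_trans ?_ (abs_snd_le_dist _ b)
    exact le_abs.mpr (Or.inr (by simp only [hb.1]; norm_num))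
  have hSS : ∀ m m' : ℤ, m ≠ m' → ∀ a ∈ Sm m, ∀ b ∈ Sm m', (1/3:ℝ) ≤ dist a b := by
    intro m m' hne a ha b hb
    refine le_trans ?_ (abs_fst_le_dist a b)
    rcases lt_or_gt_of_ne hne with hlt | hlt
    · have hc : (m:ℝ) + 1 ≤ (m':ℝ) := by exact_mod_cast (by omega : m + 1 ≤ m')
      exact le_abs.mpr (Or.inr (by linarith [ha.2.2, hb.2.1]))
    · have hc : (m':ℝ) + 1 ≤ (m:ℝ) := by exact_mod_cast (by omega : m' + 1 ≤ m)
      exact le_abs.mpr (Or.inl (by linarith [ha.2.1, hb.2.2]))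
  rintro (j | m | m) (j' | m' | m') hne a ha b hb
  · exact hPP j j' (by simpa using hne) a ha b hb
  · simp only [Sum.elim_inr, Sum.elim_inl, mem_singleton_iff] at hb
    subst hb; exact hPZ j m' a ha
  · exact hPS j m' a ha b hb
  · simp only [Sum.elim_inr, Sum.elim_inl, mem_singleton_iff] at ha
    subst ha; rw [dist_comm]; exact hPZ j' m b hb
  · simp only [Sum.elim_inr, Sum.elim_inl, mem_singleton_iff] at ha hb
    subst ha hb; exact hZZ m m' (by simpa using hne)
  · simp only [Sum.elim_inr, Sum.elim_inl, mem_singleton_iff] at ha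
    subst ha; exact hZS m m' b hb
  · rw [dist_comm]; exact hPS j' m b hb a ha
  · simp only [Sum.elim_inr, Sum.elim_inl, mem_singleton_iff] at hb
    subst hb; rw [dist_comm]; exact hZS m' m a ha
  · exact hSS m m' (by simpa using hne) a ha b hb

lemma mid_cases (hFne : F.Nonempty) (hFc : IsCompact F)
    (hF : F = ⋃ d ∈ ({(0, 0), (1, 0), (2, 0), (2, 1), (0, 2)} : Set (ℝ × ℝ)),
      (fun x : ℝ × ℝ => (3 : ℝ)⁻¹ • (x + d)) '' F)
    {K : Set (ℝ × ℝ)} (hKc : IsPreconnected K)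
    (hsub : ∀ r ∈ K, r ∈ XS F ∧ 1 ≤ r.2 ∧ r.2 ≤ 2) {k₀ : ℝ × ℝ} (hk₀ : k₀ ∈ K) :
    (∃ j : ℤ, K ⊆ Pj F j) ∨ (∃ m : ℤ, K ⊆ {((3*(m:ℝ)+1, 1) : ℝ × ℝ)}) ∨ (∃ m : ℤ, K ⊆ Sm m) := by
  set E := Sum.elim (Pj F) (Sum.elim (fun m : ℤ => {((3*(m:ℝ)+1, 1) : ℝ × ℝ)}) Sm) with hE
  have hsep := mid_sep hFne hFc hF
  have hcover : K ⊆ ⋃ i, E i := by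
    intro r hr
    obtain ⟨hX, hy1, hy2⟩ := hsub r hr
    rcases XS_mid hFne hFc hF hX hy1 hy2 with ⟨j, hj⟩ | ⟨m, hm⟩ | ⟨m, hm⟩
    · exact mem_iUnion.mpr ⟨Sum.inl j, hj⟩
    · exact mem_iUnion.mpr ⟨Sum.inr (Sum.inl m), by simpa [hE] using hm⟩
    · exact mem_iUnion.mpr ⟨Sum.inr (Sum.inr m), hm⟩
  obtain ⟨hX, hy1, hy2⟩ := hsub k₀ hk₀
  rcases XS_mid hFne hFc hF hX hy1 hy2 with ⟨j, hj⟩ | ⟨m, hm⟩ | ⟨m, hm⟩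
  · exact Or.inl ⟨j, sep_union E hsep hKc hcover (i₀ := Sum.inl j) hk₀ hj⟩
  · exact Or.inr (Or.inl ⟨m, sep_union E hsep hKc hcover (i₀ := Sum.inr (Sum.inl m)) hk₀
      (by simpa [hE] using hm)⟩)
  · exact Or.inr (Or.inr ⟨m, sep_union E hsep hKc hcover (i₀ := Sum.inr (Sum.inr m)) hk₀ hm⟩)

lemma top_sep (hFne : F.Nonempty) (hFc : IsCompact F)
    (hF : F = ⋃ d ∈ ({(0, 0), (1, 0), (2, 0), (2, 1), (0, 2)} : Set (ℝ × ℝ)),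
      (fun x : ℝ × ℝ => (3 : ℝ)⁻¹ • (x + d)) '' F) :
    ∀ i i' : Option ℤ, i ≠ i' →
      ∀ a ∈ (fun o : Option ℤ => Option.elim o (QL F) (fun j => {((3*(j:ℝ)+2, 2) : ℝ × ℝ)})) i,
      ∀ b ∈ (fun o : Option ℤ => Option.elim o (QL F) (fun j => {((3*(j:ℝ)+2, 2) : ℝ × ℝ)})) i',
      (1/3 : ℝ) ≤ dist a b := by
  have hbd := F_bounds hFne hFc hF
  have hQpt : ∀ j : ℤ, ∀ a ∈ QL F, (1/3:ℝ) ≤ dist a ((3*(j:ℝ)+2, 2) : ℝ × ℝ) := by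
    intro j a ha
    rcases ha with ⟨m, hm⟩ | h3
    · have hb := hbd _ hm
      simp only at hb
      refine le_trans ?_ (abs_fst_le_dist a _)
      rcases le_or_gt m j with hle | hlt
      · have hc : (m:ℝ) ≤ (j:ℝ) := by exact_mod_cast hle
        exact le_abs.mpr (Or.inr (by simp only; linarith [hb.1, hb.2.1]))
      · have hc : (j:ℝ) + 1 ≤ (m:ℝ) := by exact_mod_cast (by omega : j + 1 ≤ m)
        exact le_abs.mpr (Or.inl (by simp only; linarith [hb.1, hb.2.1]))
    · refine le_trans ?_ (abs_snd_le_dist a _)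
      exact le_abs.mpr (Or.inl (by simp only [h3]; norm_num))
  have hptpt : ∀ j j' : ℤ, j ≠ j' →
      (1/3:ℝ) ≤ dist ((3*(j:ℝ)+2, 2) : ℝ × ℝ) ((3*(j':ℝ)+2, 2) : ℝ × ℝ) := by
    intro j j' hne
    refine le_trans ?_ (abs_fst_le_dist _ _)
    rcases lt_or_gt_of_ne hne with hlt | hlt
    · have hc : (j:ℝ) + 1 ≤ (j':ℝ) := by exact_mod_cast (by omega : j + 1 ≤ j')
      exact le_abs.mpr (Or.inr (by simp only; linarith))
    · have hc : (j':ℝ) + 1 ≤ (j:ℝ) := by exact_mod_cast (by omega : j' + 1 ≤ j)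
      exact le_abs.mpr (Or.inl (by simp only; linarith))
  rintro (_ | j) (_ | j') hne a ha b hb
  · exact absurd rfl hne
  · simp only [Option.elim, mem_singleton_iff] at hb
    subst hb; exact hQpt j' a ha
  · simp only [Option.elim, mem_singleton_iff] at ha
    subst ha; rw [dist_comm]; exact hQpt j b hb
  · simp only [Option.elim, mem_singleton_iff] at ha hb
    subst ha hb; exact hptpt j j' (by simpa using hne)

lemma top_cases (hFne : F.Nonempty) (hFc : IsCompact F)
    (hF : F = ⋃ d ∈ ({(0, 0), (1, 0), (2, 0), (2, 1), (0, 2)} : Set (ℝ × ℝ)),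
      (fun x : ℝ × ℝ => (3 : ℝ)⁻¹ • (x + d)) '' F)
    {K : Set (ℝ × ℝ)} (hKc : IsPreconnected K)
    (hsub : ∀ r ∈ K, r ∈ XS F ∧ 2 ≤ r.2) {k₀ : ℝ × ℝ} (hk₀ : k₀ ∈ K) :
    K ⊆ QL F ∨ ∃ j : ℤ, K ⊆ {((3*(j:ℝ)+2, 2) : ℝ × ℝ)} := by
  set E := (fun o : Option ℤ => Option.elim o (QL F) (fun j => {((3*(j:ℝ)+2, 2) : ℝ × ℝ)})) with hE
  have hsep := top_sep hFne hFc hF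
  have hcover : K ⊆ ⋃ i, E i := by
    intro r hr
    obtain ⟨hX, hy2⟩ := hsub r hr
    rcases XS_top hFne hFc hF hX hy2 with hQ | ⟨j, hj⟩
    · exact mem_iUnion.mpr ⟨none, hQ⟩
    · exact mem_iUnion.mpr ⟨some j, by simpa [hE] using hj⟩
  obtain ⟨hX, hy2⟩ := hsub k₀ hk₀
  rcases XS_top hFne hFc hF hX hy2 with hQ | ⟨j, hj⟩
  · exact Or.inl (sep_union E hsep hKc hcover (i₀ := none) hk₀ hQ)
  · exact Or.inr ⟨j, sep_union E hsep hKc hcover (i₀ := some j) hk₀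
      (by simpa [hE] using hj)⟩

/-! ### The oscillation supremum -/

def VS (F : Set (ℝ × ℝ)) : Set ℝ :=
  {v | ∃ S : Set (ℝ × ℝ), ∃ p q : ℝ × ℝ, IsCompact S ∧ IsPreconnected S ∧ S ⊆ WS F ∧
        p ∈ S ∧ q ∈ S ∧ v = |p.2 - q.2|}

noncomputable def MM (F : Set (ℝ × ℝ)) : ℝ := sSup (VS F)

lemma WS_snd_bounds (hFne : F.Nonempty) (hFc : IsCompact F)
    (hF : F = ⋃ d ∈ ({(0, 0), (1, 0), (2, 0), (2, 1), (0, 2)} : Set (ℝ × ℝ)),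
      (fun x : ℝ × ℝ => (3 : ℝ)⁻¹ • (x + d)) '' F) :
    ∀ r ∈ WS F, 0 ≤ r.2 ∧ r.2 ≤ 1 := by
  rintro r (⟨j, hj⟩ | h1)
  · have := F_bounds hFne hFc hF _ hj
    simp only at this
    exact ⟨this.2.2.1, this.2.2.2⟩
  · rw [h1]; norm_num

lemma VS_bdd (hFne : F.Nonempty) (hFc : IsCompact F)
    (hF : F = ⋃ d ∈ ({(0, 0), (1, 0), (2, 0), (2, 1), (0, 2)} : Set (ℝ × ℝ)),
      (fun x : ℝ × ℝ => (3 : ℝ)⁻¹ • (x + d)) '' F) :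
    BddAbove (VS F) := by
  refine ⟨1, ?_⟩
  rintro v ⟨S, p, q, hS, hSc, hsub, hp, hq, rfl⟩
  have h1 := WS_snd_bounds hFne hFc hF p (hsub hp)
  have h2 := WS_snd_bounds hFne hFc hF q (hsub hq)
  exact abs_le.mpr ⟨by linarith, by linarith⟩

lemma VS_zero (hFne : F.Nonempty) : (0 : ℝ) ∈ VS F := by
  obtain ⟨x₀, hx₀⟩ := hFne
  exact ⟨{x₀}, x₀, x₀, isCompact_singleton, isPreconnected_singleton,
    singleton_subset_iff.mpr (F_sub_WS hx₀), rfl, rfl, by simp⟩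

lemma MM_nonneg (hFne : F.Nonempty) (hFc : IsCompact F)
    (hF : F = ⋃ d ∈ ({(0, 0), (1, 0), (2, 0), (2, 1), (0, 2)} : Set (ℝ × ℝ)),
      (fun x : ℝ × ℝ => (3 : ℝ)⁻¹ • (x + d)) '' F) :
    0 ≤ MM F := le_csSup (VS_bdd hFne hFc hF) (VS_zero hFne)

lemma osc_le (hFne : F.Nonempty) (hFc : IsCompact F)
    (hF : F = ⋃ d ∈ ({(0, 0), (1, 0), (2, 0), (2, 1), (0, 2)} : Set (ℝ × ℝ)),
      (fun x : ℝ × ℝ => (3 : ℝ)⁻¹ • (x + d)) '' F)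
    {S : Set (ℝ × ℝ)} {p q : ℝ × ℝ} (hS : IsCompact S) (hSc : IsPreconnected S)
    (hsub : S ⊆ WS F) (hp : p ∈ S) (hq : q ∈ S) : |p.2 - q.2| ≤ MM F :=
  le_csSup (VS_bdd hFne hFc hF) ⟨S, p, q, hS, hSc, hsub, hp, hq, rfl⟩

/-! ### No connected subset of `F` joins the bottom to the top -/

lemma no_full_height (hFne : F.Nonempty) (hFc : IsCompact F)
    (hF : F = ⋃ d ∈ ({(0, 0), (1, 0), (2, 0), (2, 1), (0, 2)} : Set (ℝ × ℝ)),
      (fun x : ℝ × ℝ => (3 : ℝ)⁻¹ • (x + d)) '' F)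
    {C : Set (ℝ × ℝ)} (hCc : IsPreconnected C) (hCF : C ⊆ F)
    (h0 : ∃ z ∈ C, z.2 = 0) (h1 : ∃ z ∈ C, z.2 = 1) : False := by
  have hbd := F_bounds hFne hFc hF
  have hcor := corner_mem hFne hFc hF
  set img : ℝ → ℝ → Set (ℝ × ℝ) :=
    fun a b => (fun r : ℝ × ℝ => ((3:ℝ)⁻¹*(r.1+a), (3:ℝ)⁻¹*(r.2+b))) '' F with himg
  have himgc : ∀ a b : ℝ, IsClosed (img a b) := by
    intro a b
    exact (hFc.image (by fun_prop)).isClosed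
  set Btop := img 0 2 with hBtop
  set Afour := img 0 0 ∪ img 1 0 ∪ img 2 0 ∪ img 2 1 with hAfour
  have hdecomp : ∀ p ∈ F, p ∈ Btop ∪ Afour := by
    intro p hp
    obtain ⟨q, hq, a, b, heq, hab⟩ := F_cases hF hp
    rcases hab with ⟨ha, hb⟩ | ⟨ha, hb⟩ | ⟨ha, hb⟩ | ⟨ha, hb⟩ | ⟨ha, hb⟩ <;> subst ha hb
    · exact Or.inr (Or.inl (Or.inl (Or.inl ⟨q, hq, heq.symm⟩)))
    · exact Or.inr (Or.inl (Or.inl (Or.inr ⟨q, hq, heq.symm⟩)))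
    · exact Or.inr (Or.inl (Or.inr ⟨q, hq, heq.symm⟩))
    · exact Or.inr (Or.inr ⟨q, hq, heq.symm⟩)
    · exact Or.inl ⟨q, hq, heq.symm⟩
  obtain ⟨z1, hz1C, hz12⟩ := h1
  obtain ⟨z0, hz0C, hz02⟩ := h0
  have hz1F : z1 ∈ F := hCF hz1C
  have hz1e : z1 = ((0:ℝ), (1:ℝ)) := slice_top hFne hFc hF _ hz1F hz12
  have hz1B : z1 ∈ Btop := by
    rw [hz1e]
    exact ⟨((0:ℝ), (1:ℝ)), hcor.2.2, by norm_num⟩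
  have hz0A : z0 ∈ Afour := by
    rcases hdecomp z0 (hCF hz0C) with hB | hA
    · exfalso
      obtain ⟨r, hr, hre⟩ := hB
      have he2 : z0.2 = (3:ℝ)⁻¹ * (r.2 + 2) := by rw [← hre]
      have hb2 := (hbd r hr).2.2.1
      rw [hz02] at he2
      linarith
    · exact hA
  have hAclosed : IsClosed Afour :=
    (((himgc 0 0).union (himgc 1 0)).union (himgc 2 0)).union (himgc 2 1)
  obtain ⟨w, hwC, hwB, hwA⟩ := isPreconnected_closed_iff.mp hCc Btop Afour
    (himgc 0 2) hAclosed (fun p hp => hdecomp p (hCF hp)) ⟨z1, hz1C, hz1B⟩ ⟨z0, hz0C, hz0A⟩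
  obtain ⟨r, hr, hre⟩ := hwB
  have hw1 : w.1 = (3:ℝ)⁻¹ * (r.1 + 0) := by rw [← hre]
  have hw2 : w.2 = (3:ℝ)⁻¹ * (r.2 + 2) := by rw [← hre]
  have hrb := hbd r hr
  rcases hwA with ((⟨s, hs, hse⟩ | ⟨s, hs, hse⟩) | ⟨s, hs, hse⟩) | ⟨s, hs, hse⟩
  · have hs2 : w.2 = (3:ℝ)⁻¹ * (s.2 + 0) := by rw [← hse]
    have hsb := hbd s hs
    nlinarith [hrb.2.2.1, hsb.2.2.2]
  · have hs2 : w.2 = (3:ℝ)⁻¹ * (s.2 + 0) := by rw [← hse]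
    have hsb := hbd s hs
    nlinarith [hrb.2.2.1, hsb.2.2.2]
  · have hs2 : w.2 = (3:ℝ)⁻¹ * (s.2 + 0) := by rw [← hse]
    have hsb := hbd s hs
    nlinarith [hrb.2.2.1, hsb.2.2.2]
  · have hs1 : w.1 = (3:ℝ)⁻¹ * (s.1 + 2) := by rw [← hse]
    have hsb := hbd s hs
    nlinarith [hrb.2.1, hsb.1]

/-! ### The key contraction step -/

lemma key_step (hFne : F.Nonempty) (hFc : IsCompact F)
    (hF : F = ⋃ d ∈ ({(0, 0), (1, 0), (2, 0), (2, 1), (0, 2)} : Set (ℝ × ℝ)),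
      (fun x : ℝ × ℝ => (3 : ℝ)⁻¹ • (x + d)) '' F) :
    ∀ v ∈ VS F, v ≤ 2/3 * MM F := by
  rintro v ⟨S, p, q, hS, hSc, hsub, hpS, hqS, rfl⟩
  have hM0 := MM_nonneg hFne hFc hF
  set τ : ℝ × ℝ → ℝ × ℝ := fun r => (3*r.1, 3*r.2) with hτ
  have hτc : Continuous τ := by fun_prop
  set S' := τ '' S with hS'def
  have hS' : IsCompact S' := hS.image hτc
  have hS'c : IsPreconnected S' := hSc.image τ hτc.continuousOn
  have hS'X : ∀ r ∈ S', r ∈ XS F := by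
    rintro _ ⟨s, hs, rfl⟩; exact scale_mem_XS hF (hsub hs)
  have hS'ne : S'.Nonempty := ⟨τ p, mem_image_of_mem τ hpS⟩
  obtain ⟨pa, hpaS', hpa'⟩ := hS'.exists_isMinOn hS'ne continuous_snd.continuousOn
  obtain ⟨pb, hpbS', hpb'⟩ := hS'.exists_isMaxOn hS'ne continuous_snd.continuousOn
  have hpa : ∀ y ∈ S', pa.2 ≤ y.2 := fun y hy => hpa' hy
  have hpb : ∀ y ∈ S', y.2 ≤ pb.2 := fun y hy => hpb' hy
  suffices hkey : pb.2 - pa.2 ≤ 2 * MM F by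
    have hp1 : pa.2 ≤ (τ p).2 := hpa _ (mem_image_of_mem τ hpS)
    have hp2 : (τ p).2 ≤ pb.2 := hpb _ (mem_image_of_mem τ hpS)
    have hq1 : pa.2 ≤ (τ q).2 := hpa _ (mem_image_of_mem τ hqS)
    have hq2 : (τ q).2 ≤ pb.2 := hpb _ (mem_image_of_mem τ hqS)
    have hp1' : pa.2 ≤ 3 * p.2 := hp1
    have hp2' : 3 * p.2 ≤ pb.2 := hp2
    have hq1' : pa.2 ≤ 3 * q.2 := hq1
    have hq2' : 3 * q.2 ≤ pb.2 := hq2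
    have e : |p.2 - q.2| ≤ (pb.2 - pa.2)/3 := abs_le.mpr ⟨by linarith, by linarith⟩
    linarith
  -- main case analysis on the vertical extent of S'
  rcases le_or_gt pb.2 1 with hb1 | hb1
  · -- S' lies in the bottom layer
    have hWS : S' ⊆ WS F := fun r hr => XS_bot hFne hFc hF (hS'X r hr) (le_trans (hpb r hr) hb1)
    have h := osc_le hFne hFc hF hS' hS'c hWS hpbS' hpaS'
    have := le_abs_self (pb.2 - pa.2)
    linarith
  rcases le_or_gt 2 pa.2 with ha2 | ha2
  · -- S' lies in the top layer
    have hsubt : ∀ r ∈ S', r ∈ XS F ∧ 2 ≤ r.2 := fun r hr =>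
      ⟨hS'X r hr, le_trans ha2 (hpa r hr)⟩
    rcases top_cases hFne hFc hF hS'c hsubt hpaS' with hQ | ⟨j, hpt⟩
    · set φ : ℝ × ℝ → ℝ × ℝ := fun r => (r.1, r.2 - 2) with hφ
      have hφc : Continuous φ := by fun_prop
      have hKW : φ '' S' ⊆ WS F := by
        rintro _ ⟨r, hr, rfl⟩
        rcases hQ hr with ⟨j, hj⟩ | h3
        · refine Or.inl ⟨3*j, ?_⟩
          show ((r.1 - ((3*j : ℤ) : ℝ), r.2 - 2) : ℝ × ℝ) ∈ F
          have hc : ((3*j : ℤ) : ℝ) = 3*(j:ℝ) := by push_cast; ring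
          rw [hc]; exact hj
        · exact Or.inr (show r.2 - 2 = 1 by rw [h3]; norm_num)
      have h := osc_le hFne hFc hF (hS'.image hφc) (hS'c.image φ hφc.continuousOn) hKW
        (mem_image_of_mem φ hpbS') (mem_image_of_mem φ hpaS')
      have he : |(φ pb).2 - (φ pa).2| = |pb.2 - pa.2| := by
        show |(pb.2 - 2) - (pa.2 - 2)| = _
        ring_nf
      rw [he] at h
      have := le_abs_self (pb.2 - pa.2)
      linarith
    · have h1 := hpt hpbS'
      have h2 := hpt hpaS'
      rw [mem_singleton_iff] at h1 h2
      rw [h1, h2]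
      simp
      linarith
  rcases le_or_gt pb.2 2 with hb2 | hb2
  · rcases le_or_gt 1 pa.2 with ha1 | ha1
    · -- S' lies in the middle layer
      have hsubm : ∀ r ∈ S', r ∈ XS F ∧ 1 ≤ r.2 ∧ r.2 ≤ 2 := fun r hr =>
        ⟨hS'X r hr, le_trans ha1 (hpa r hr), le_trans (hpb r hr) hb2⟩
      rcases mid_cases hFne hFc hF hS'c hsubm hpaS' with ⟨j, hPj⟩ | ⟨m, hZ⟩ | ⟨m, hSm⟩
      · set φ : ℝ × ℝ → ℝ × ℝ := fun r => (r.1 - (3*(j:ℝ)+2), r.2 - 1) with hφ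
        have hφc : Continuous φ := by fun_prop
        have hKW : φ '' S' ⊆ WS F := by
          rintro _ ⟨r, hr, rfl⟩
          exact F_sub_WS (hPj hr)
        have h := osc_le hFne hFc hF (hS'.image hφc) (hS'c.image φ hφc.continuousOn) hKW
          (mem_image_of_mem φ hpbS') (mem_image_of_mem φ hpaS')
        have he : |(φ pb).2 - (φ pa).2| = |pb.2 - pa.2| := by
          show |(pb.2 - 1) - (pa.2 - 1)| = _
          ring_nf
        rw [he] at h
        have := le_abs_self (pb.2 - pa.2)
        linarith
      · have h1 := hZ hpbS'
        have h2 := hZ hpaS'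
        rw [mem_singleton_iff] at h1 h2
        rw [h1, h2]
        simp
        linarith
      · have h1 := (hSm hpbS').1
        have h2 := (hSm hpaS').1
        rw [h1, h2]
        simp
        linarith
    · -- pa below the line y = 1, pb in the middle layer
      -- lower estimate
      obtain ⟨z₁, hz₁K, hz₁⟩ := bump hS' hS'c (g := fun r : ℝ × ℝ => -r.2) (by fun_prop)
        hpaS' (t := (-1 : ℝ)) (by simp only [neg_le_neg_iff]; linarith) ⟨pb, hpbS', by show -pb.2 < (-1 : ℝ); linarith⟩
      have hA₁eq : {r : ℝ × ℝ | r ∈ S' ∧ (-1 : ℝ) ≤ (fun r : ℝ × ℝ => -r.2) r} =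
          S' ∩ {r : ℝ × ℝ | r.2 ≤ 1} := by
        ext r
        constructor
        · rintro ⟨h1, h2⟩
          have h2' : (-1:ℝ) ≤ -r.2 := h2
          refine ⟨h1, ?_⟩
          show r.2 ≤ 1
          linarith
        · rintro ⟨h1, h2⟩
          have h2' : r.2 ≤ 1 := h2
          refine ⟨h1, ?_⟩
          show (-1:ℝ) ≤ -r.2
          linarith
      rw [hA₁eq] at hz₁K
      have hz₁2 : z₁.2 = 1 := by
        have h : -z₁.2 = -1 := hz₁; linarith
      set A₁ := S' ∩ {r : ℝ × ℝ | r.2 ≤ 1} with hA₁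
      have hA₁c : IsCompact A₁ := hS'.of_isClosed_subset
        (hS'.isClosed.inter (isClosed_le continuous_snd continuous_const)) inter_subset_left
      have hK₁ : IsCompact (connectedComponentIn A₁ pa) := compIn_isCompact hA₁c pa
      have hK₁W : connectedComponentIn A₁ pa ⊆ WS F := fun r hr => by
        have h := connectedComponentIn_subset A₁ pa hr
        exact XS_bot hFne hFc hF (hS'X r h.1) h.2
      have hpaK : pa ∈ connectedComponentIn A₁ pa :=
        mem_connectedComponentIn ⟨hpaS', le_of_lt ha1⟩
      have hosc1 := osc_le hFne hFc hF hK₁ isPreconnected_connectedComponentIn hK₁W hpaK hz₁K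
      have hlow : 1 - pa.2 ≤ MM F := by
        rw [hz₁2] at hosc1
        have := neg_abs_le (pa.2 - 1)
        linarith [abs_nonneg (pa.2 - 1), (abs_sub_comm pa.2 1) ▸ hosc1]
      -- upper estimate
      obtain ⟨z₂, hz₂K, hz₂⟩ := bump hS' hS'c (g := fun r : ℝ × ℝ => r.2) continuous_snd
        hpbS' (t := (1 : ℝ)) (le_of_lt hb1) ⟨pa, hpaS', ha1⟩
      have hA₂eq : {r : ℝ × ℝ | r ∈ S' ∧ (1 : ℝ) ≤ (fun r : ℝ × ℝ => r.2) r} =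
          S' ∩ {r : ℝ × ℝ | 1 ≤ r.2} := rfl
      rw [hA₂eq] at hz₂K
      set A₂ := S' ∩ {r : ℝ × ℝ | 1 ≤ r.2} with hA₂
      have hA₂c : IsCompact A₂ := hS'.of_isClosed_subset
        (hS'.isClosed.inter (isClosed_le continuous_const continuous_snd)) inter_subset_left
      have hpbK : pb ∈ connectedComponentIn A₂ pb :=
        mem_connectedComponentIn ⟨hpbS', le_of_lt hb1⟩
      have hsubm₂ : ∀ r ∈ connectedComponentIn A₂ pb, r ∈ XS F ∧ 1 ≤ r.2 ∧ r.2 ≤ 2 := by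
        intro r hr
        have h := connectedComponentIn_subset A₂ pb hr
        exact ⟨hS'X r h.1, h.2, le_trans (hpb r h.1) hb2⟩
      have hhigh : pb.2 - 1 ≤ MM F := by
        rcases mid_cases hFne hFc hF isPreconnected_connectedComponentIn hsubm₂ hpbK
          with ⟨j, hPj⟩ | ⟨m, hZ⟩ | ⟨m, hSm⟩
        · set φ : ℝ × ℝ → ℝ × ℝ := fun r => (r.1 - (3*(j:ℝ)+2), r.2 - 1) with hφ
          have hφc : Continuous φ := by fun_prop
          have hKW : φ '' connectedComponentIn A₂ pb ⊆ WS F := by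
            rintro _ ⟨r, hr, rfl⟩
            exact F_sub_WS (hPj hr)
          have h := osc_le hFne hFc hF ((compIn_isCompact hA₂c pb).image hφc)
            (isPreconnected_connectedComponentIn.image φ hφc.continuousOn) hKW
            (mem_image_of_mem φ hpbK) (mem_image_of_mem φ hz₂K)
          have he : |(φ pb).2 - (φ z₂).2| = |pb.2 - z₂.2| := by
            show |(pb.2 - 1) - (z₂.2 - 1)| = _
            ring_nf
          rw [he, hz₂] at h
          linarith [le_abs_self (pb.2 - 1)]
        · have h1 := hZ hpbK
          rw [mem_singleton_iff] at h1
          have : pb.2 = 1 := by rw [h1]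
          linarith
        · have h1 := (hSm hz₂K).1
          rw [hz₂] at h1
          norm_num at h1
      linarith
  · rcases le_or_gt 1 pa.2 with ha1 | ha1
    · -- pa in the middle layer, pb above the line y = 2
      -- lower estimate
      obtain ⟨z₁, hz₁K, hz₁⟩ := bump hS' hS'c (g := fun r : ℝ × ℝ => -r.2) (by fun_prop)
        hpaS' (t := (-2 : ℝ)) (by simp only [neg_le_neg_iff]; linarith) ⟨pb, hpbS', by show -pb.2 < (-2 : ℝ); linarith⟩
      have hA₁eq : {r : ℝ × ℝ | r ∈ S' ∧ (-2 : ℝ) ≤ (fun r : ℝ × ℝ => -r.2) r} =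
          S' ∩ {r : ℝ × ℝ | r.2 ≤ 2} := by
        ext r
        constructor
        · rintro ⟨h1, h2⟩
          have h2' : (-2:ℝ) ≤ -r.2 := h2
          refine ⟨h1, ?_⟩
          show r.2 ≤ 2
          linarith
        · rintro ⟨h1, h2⟩
          have h2' : r.2 ≤ 2 := h2
          refine ⟨h1, ?_⟩
          show (-2:ℝ) ≤ -r.2
          linarith
      rw [hA₁eq] at hz₁K
      have hz₁2 : z₁.2 = 2 := by
        have h : -z₁.2 = -2 := hz₁; linarith
      set A₁ := S' ∩ {r : ℝ × ℝ | r.2 ≤ 2} with hA₁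
      have hA₁c : IsCompact A₁ := hS'.of_isClosed_subset
        (hS'.isClosed.inter (isClosed_le continuous_snd continuous_const)) inter_subset_left
      have hpaK : pa ∈ connectedComponentIn A₁ pa :=
        mem_connectedComponentIn ⟨hpaS', le_of_lt ha2⟩
      have hsubm₁ : ∀ r ∈ connectedComponentIn A₁ pa, r ∈ XS F ∧ 1 ≤ r.2 ∧ r.2 ≤ 2 := by
        intro r hr
        have h := connectedComponentIn_subset A₁ pa hr
        exact ⟨hS'X r h.1, le_trans ha1 (hpa r h.1), h.2⟩
      have hlow : 2 - pa.2 ≤ MM F := by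
        rcases mid_cases hFne hFc hF isPreconnected_connectedComponentIn hsubm₁ hpaK
          with ⟨j, hPj⟩ | ⟨m, hZ⟩ | ⟨m, hSm⟩
        · set φ : ℝ × ℝ → ℝ × ℝ := fun r => (r.1 - (3*(j:ℝ)+2), r.2 - 1) with hφ
          have hφc : Continuous φ := by fun_prop
          have hKW : φ '' connectedComponentIn A₁ pa ⊆ WS F := by
            rintro _ ⟨r, hr, rfl⟩
            exact F_sub_WS (hPj hr)
          have h := osc_le hFne hFc hF ((compIn_isCompact hA₁c pa).image hφc)
            (isPreconnected_connectedComponentIn.image φ hφc.continuousOn) hKW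
            (mem_image_of_mem φ hpaK) (mem_image_of_mem φ hz₁K)
          have he : |(φ pa).2 - (φ z₁).2| = |pa.2 - z₁.2| := by
            show |(pa.2 - 1) - (z₁.2 - 1)| = _
            ring_nf
          rw [he, hz₁2] at h
          linarith [neg_abs_le (pa.2 - 2)]
        · have h1 := hZ hz₁K
          rw [mem_singleton_iff] at h1
          have : z₁.2 = 1 := by rw [h1]
          linarith
        · have h1 := (hSm hpaK).1
          linarith
      -- upper estimate
      obtain ⟨z₂, hz₂K, hz₂⟩ := bump hS' hS'c (g := fun r : ℝ × ℝ => r.2) continuous_snd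
        hpbS' (t := (2 : ℝ)) (le_of_lt hb2) ⟨pa, hpaS', ha2⟩
      have hA₂eq : {r : ℝ × ℝ | r ∈ S' ∧ (2 : ℝ) ≤ (fun r : ℝ × ℝ => r.2) r} =
          S' ∩ {r : ℝ × ℝ | 2 ≤ r.2} := rfl
      rw [hA₂eq] at hz₂K
      set A₂ := S' ∩ {r : ℝ × ℝ | 2 ≤ r.2} with hA₂
      have hA₂c : IsCompact A₂ := hS'.of_isClosed_subset
        (hS'.isClosed.inter (isClosed_le continuous_const continuous_snd)) inter_subset_left
      have hpbK : pb ∈ connectedComponentIn A₂ pb :=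
        mem_connectedComponentIn ⟨hpbS', le_of_lt hb2⟩
      have hsubt₂ : ∀ r ∈ connectedComponentIn A₂ pb, r ∈ XS F ∧ 2 ≤ r.2 := by
        intro r hr
        have h := connectedComponentIn_subset A₂ pb hr
        exact ⟨hS'X r h.1, h.2⟩
      have hhigh : pb.2 - 2 ≤ MM F := by
        rcases top_cases hFne hFc hF isPreconnected_connectedComponentIn hsubt₂ hpbK
          with hQ | ⟨j, hpt⟩
        · set φ : ℝ × ℝ → ℝ × ℝ := fun r => (r.1, r.2 - 2) with hφ
          have hφc : Continuous φ := by fun_prop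
          have hKW : φ '' connectedComponentIn A₂ pb ⊆ WS F := by
            rintro _ ⟨r, hr, rfl⟩
            rcases hQ hr with ⟨j, hj⟩ | h3
            · refine Or.inl ⟨3*j, ?_⟩
              show ((r.1 - ((3*j : ℤ) : ℝ), r.2 - 2) : ℝ × ℝ) ∈ F
              have hc : ((3*j : ℤ) : ℝ) = 3*(j:ℝ) := by push_cast; ring
              rw [hc]; exact hj
            · exact Or.inr (show r.2 - 2 = 1 by rw [h3]; norm_num)
          have h := osc_le hFne hFc hF ((compIn_isCompact hA₂c pb).image hφc)
            (isPreconnected_connectedComponentIn.image φ hφc.continuousOn) hKW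
            (mem_image_of_mem φ hpbK) (mem_image_of_mem φ hz₂K)
          have he : |(φ pb).2 - (φ z₂).2| = |pb.2 - z₂.2| := by
            show |(pb.2 - 2) - (z₂.2 - 2)| = _
            ring_nf
          rw [he, hz₂] at h
          linarith [le_abs_self (pb.2 - 2)]
        · have h1 := hpt hpbK
          rw [mem_singleton_iff] at h1
          have : pb.2 = 2 := by rw [h1]
          linarith
      linarith
    · -- pa below y = 1 and pb above y = 2 : impossible
      exfalso
      obtain ⟨vv, hvY, ⟨z₁, hz₁, hz₁2⟩, ⟨z₂, hz₂, hz₂2⟩⟩ := crossing hS' hS'c one_lt_two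
        ⟨pa, hpaS', ha1⟩ ⟨pb, hpbS', hb2⟩
      set Y := S' ∩ {r : ℝ × ℝ | 1 ≤ r.2 ∧ r.2 ≤ 2} with hY
      have hYc : IsCompact Y := hS'.of_isClosed_subset
        (hS'.isClosed.inter ((isClosed_le continuous_const continuous_snd).inter
          (isClosed_le continuous_snd continuous_const))) inter_subset_left
      have hsubm : ∀ r ∈ connectedComponentIn Y vv, r ∈ XS F ∧ 1 ≤ r.2 ∧ r.2 ≤ 2 := by
        intro r hr
        have h := connectedComponentIn_subset Y vv hr
        exact ⟨hS'X r h.1, h.2.1, h.2.2⟩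
      have hvK : vv ∈ connectedComponentIn Y vv := mem_connectedComponentIn hvY
      rcases mid_cases hFne hFc hF isPreconnected_connectedComponentIn hsubm hvK
        with ⟨j, hPj⟩ | ⟨m, hZ⟩ | ⟨m, hSm⟩
      · set φ : ℝ × ℝ → ℝ × ℝ := fun r => (r.1 - (3*(j:ℝ)+2), r.2 - 1) with hφ
        have hφc : Continuous φ := by fun_prop
        refine no_full_height hFne hFc hF
          (isPreconnected_connectedComponentIn.image φ hφc.continuousOn)
          (by rintro _ ⟨r, hr, rfl⟩; exact hPj hr) ?_ ?_
        · exact ⟨φ z₁, mem_image_of_mem φ hz₁, show z₁.2 - 1 = 0 by rw [hz₁2]; norm_num⟩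
        · exact ⟨φ z₂, mem_image_of_mem φ hz₂, show z₂.2 - 1 = 1 by rw [hz₂2]; norm_num⟩
      · have h1 := hZ hz₂
        rw [mem_singleton_iff] at h1
        have : z₂.2 = 1 := by rw [h1]
        linarith
      · have h1 := (hSm hz₁).1
        linarith

/-! ### Conclusion: vertical oscillation vanishes -/

lemma MM_zero (hFne : F.Nonempty) (hFc : IsCompact F)
    (hF : F = ⋃ d ∈ ({(0, 0), (1, 0), (2, 0), (2, 1), (0, 2)} : Set (ℝ × ℝ)),
      (fun x : ℝ × ℝ => (3 : ℝ)⁻¹ • (x + d)) '' F) :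
    MM F = 0 := by
  have h1 : MM F ≤ 2/3 * MM F :=
    csSup_le ⟨0, VS_zero hFne⟩ (key_step hFne hFc hF)
  have h2 := MM_nonneg hFne hFc hF
  linarith

lemma snd_const (hFne : F.Nonempty) (hFc : IsCompact F)
    (hF : F = ⋃ d ∈ ({(0, 0), (1, 0), (2, 0), (2, 1), (0, 2)} : Set (ℝ × ℝ)),
      (fun x : ℝ × ℝ => (3 : ℝ)⁻¹ • (x + d)) '' F)
    {S : Set (ℝ × ℝ)} (hS : IsCompact S) (hSc : IsPreconnected S) (hsub : S ⊆ F)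
    {p q : ℝ × ℝ} (hp : p ∈ S) (hq : q ∈ S) : p.2 = q.2 := by
  have h := osc_le hFne hFc hF hS hSc (fun r hr => F_sub_WS (hsub hr)) hp hq
  rw [MM_zero hFne hFc hF] at h
  have := abs_nonneg (p.2 - q.2)
  have : |p.2 - q.2| = 0 := le_antisymm h this
  have := abs_eq_zero.mp this
  linarith

end Frac

/-- Let `F` be the fractal square with base `3` and digit set
`D = {(0,0),(1,0),(2,0),(2,1),(0,2)}`. Then every connected component of `F` is
either a single point or a horizontal line segment `[a,b] × {c}` with `a < b`. -/
theorem fractalSquare_components_point_or_horizontal_segment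
    (F : Set (ℝ × ℝ)) (hFne : F.Nonempty) (hFc : IsCompact F)
    (hF : F = ⋃ d ∈ ({(0, 0), (1, 0), (2, 0), (2, 1), (0, 2)} : Set (ℝ × ℝ)),
      (fun x : ℝ × ℝ => (3 : ℝ)⁻¹ • (x + d)) '' F) :
    ∀ x ∈ F, (∃ p : ℝ × ℝ, connectedComponentIn F x = {p})
      ∨ (∃ a b c : ℝ, a < b ∧
          connectedComponentIn F x = Set.Icc a b ×ˢ ({c} : Set ℝ)) := by
  intro x hx
  set C := connectedComponentIn F x with hC
  have hCsub : C ⊆ F := connectedComponentIn_subset F x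
  have hCc : IsCompact C := Frac.compIn_isCompact hFc x
  have hCp : IsPreconnected C := isPreconnected_connectedComponentIn
  have hxC : x ∈ C := mem_connectedComponentIn hx
  have hconst : ∀ r ∈ C, r.2 = x.2 := fun r hr =>
    Frac.snd_const hFne hFc hF hCc hCp hCsub hr hxC
  set I := Prod.fst '' C with hI
  have hIc : IsCompact I := hCc.image continuous_fst
  have hIconn : IsConnected I :=
    ⟨⟨x.1, mem_image_of_mem _ hxC⟩, hCp.image _ continuous_fst.continuousOn⟩
  have hIcc : I = Set.Icc (sInf I) (sSup I) := eq_Icc_of_connected_compact hIconn hIc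
  set a := sInf I with ha
  set b := sSup I with hb
  set c := x.2 with hc
  have hCeq : C = Set.Icc a b ×ˢ ({c} : Set ℝ) := by
    ext r
    constructor
    · intro hr
      refine Set.mk_mem_prod ?_ (hconst r hr)
      rw [← hIcc]
      exact mem_image_of_mem _ hr
    · rintro ⟨h1, h2⟩
      rw [← hIcc] at h1
      obtain ⟨w, hwC, hw1⟩ := h1
      have hw : w = r := by
        rw [Prod.ext_iff]
        exact ⟨hw1, by rw [hconst w hwC]; exact h2.symm⟩
      rw [← hw]; exact hwC
  have hab : a ≤ b := csInf_le_csSup hIconn.nonempty hIc.bddBelow hIc.bddAbove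
  rcases eq_or_lt_of_le hab with heq | hlt
  · left
    refine ⟨(a, c), ?_⟩
    rw [hCeq, ← heq, Set.Icc_self, Set.singleton_prod_singleton]
  · right
    exact ⟨a, b, c, hlt, hCeq⟩
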